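/- (Case 19: additional singularities of Q_{(7:−5)}) Let b ∈ ℂ satisfy b^2 + 4b + 7 = 0. Then the point η := (3,3,3,3,b,b,b,−4−b,−4−b,−4−b) ∈ ℂ^{10} satisfies S_1(η) = 0 and there exists μ ∈ ℂ with (∂F_{7,−5}/∂x_i)(η) = μ for all i = 0,…,9; that is, η is a singular point of the hyperquintic Q_{(7:−5)} = {7·S_5 − 5·S_2·S_3 = 0} in ℙ^8(ℂ). -/

import Mathlib

open MvPolynomial Finset

lemma multiset_esymm_zero (s : Multiset ℂ) : s.esymm 0 = 1 := by
  simp [Multiset.esymm]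

lemma multiset_esymm_nil (n : ℕ) : (0 : Multiset ℂ).esymm (n + 1) = 0 := by
  simp [Multiset.esymm, Multiset.powersetCard_zero_right]

lemma multiset_esymm_cons (a : ℂ) (s : Multiset ℂ) (n : ℕ) :
    (a ::ₘ s).esymm (n + 1) = s.esymm (n + 1) + a * s.esymm n := by
  simp [Multiset.esymm, Multiset.powersetCard_cons, Multiset.sum_map_mul_left,
    Multiset.map_map, Function.comp_def]

lemma pderiv_prod_X {σ : Type*} [DecidableEq σ] {j : σ} {t : Finset σ} (h : j ∉ t) :
    pderiv j (∏ i ∈ t, X i : MvPolynomial σ ℂ) = 0 := by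
  induction t using Finset.induction_on with
  | empty => simp [pderiv_one]
  | insert a s ha ih =>
    rw [Finset.prod_insert ha, pderiv_mul,
      pderiv_X_of_ne (fun hc => h (by simp [hc])),
      ih (fun hc => h (by simp [hc]))]
    ring

lemma eval_esymm_eq {σ : Type*} [Fintype σ] (η : σ → ℂ) (k : ℕ) :
    eval η (esymm σ ℂ k) = (Finset.univ.val.map η).esymm k := by
  rw [esymm, map_sum, Finset.esymm_map_val]
  exact Finset.sum_congr rfl fun t _ => by rw [map_prod]; simp

lemma eval_pderiv_esymm {σ : Type*} [Fintype σ] [DecidableEq σ] (η : σ → ℂ) (j : σ) (k : ℕ) :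
    eval η (pderiv j (esymm σ ℂ (k + 1))) = ((Finset.univ.erase j).val.map η).esymm k := by
  set A := Finset.univ.erase j with hA
  have hj : j ∉ A := Finset.notMem_erase _ _
  have huniv : (Finset.univ : Finset σ) = insert j A :=
    (Finset.insert_erase (Finset.mem_univ j)).symm
  have hdisj : Disjoint (A.powersetCard (k + 1)) ((A.powersetCard k).image (insert j)) := by
    rw [Finset.disjoint_left]
    intro t ht ht'
    obtain ⟨s, hs, rfl⟩ := Finset.mem_image.mp ht'
    exact hj (Finset.mem_of_subset (Finset.mem_powersetCard.mp ht).1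
      (Finset.mem_insert_self j s))
  rw [esymm, huniv, Finset.powersetCard_succ_insert hj, Finset.sum_union hdisj, map_add,
    map_add]
  have h1 : eval η (pderiv j
      (∑ t ∈ A.powersetCard (k + 1), ∏ i ∈ t, (X i : MvPolynomial σ ℂ))) = 0 := by
    simp only [map_sum]
    exact Finset.sum_eq_zero fun t ht => by
      rw [pderiv_prod_X
        (fun hc => hj (Finset.mem_of_subset (Finset.mem_powersetCard.mp ht).1 hc)), map_zero]
  have h2 : eval η (pderiv j
      (∑ t ∈ (A.powersetCard k).image (insert j), ∏ i ∈ t, (X i : MvPolynomial σ ℂ)))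
      = (A.val.map η).esymm k := by
    have hinj : ∀ s ∈ A.powersetCard k, ∀ s' ∈ A.powersetCard k,
        insert j s = insert j s' → s = s' := by
      intro s hs s' hs' h
      have h1 : j ∉ s := fun hc => hj (Finset.mem_of_subset (Finset.mem_powersetCard.mp hs).1 hc)
      have h2 : j ∉ s' := fun hc => hj (Finset.mem_of_subset (Finset.mem_powersetCard.mp hs').1 hc)
      rw [← Finset.erase_insert h1, h, Finset.erase_insert h2]
    rw [Finset.sum_image hinj, Finset.esymm_map_val]
    simp only [map_sum]
    refine Finset.sum_congr rfl fun s hs => ?_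
    have h1 : j ∉ s := fun hc => hj (Finset.mem_of_subset (Finset.mem_powersetCard.mp hs).1 hc)
    rw [Finset.prod_insert h1, pderiv_mul, pderiv_X_self, pderiv_prod_X h1, one_mul, mul_zero,
      add_zero, map_prod]
    simp
  rw [h1, h2, zero_add]

lemma keyD (η : Fin 10 → ℂ) (j : Fin 10) :
    eval η (pderiv j (C (7 : ℂ) * esymm (Fin 10) ℂ 5
        + C (-5 : ℂ) * (esymm (Fin 10) ℂ 2 * esymm (Fin 10) ℂ 3)))
      = 7 * (((Finset.univ.erase j).val.map η).esymm 4)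
        + (-5) * (((Finset.univ.erase j).val.map η).esymm 1 * ((Finset.univ.val.map η).esymm 3)
          + ((Finset.univ.val.map η).esymm 2) * (((Finset.univ.erase j).val.map η).esymm 2)) := by
  have h5 : eval η (pderiv j (esymm (Fin 10) ℂ 5)) = ((Finset.univ.erase j).val.map η).esymm 4 :=
    eval_pderiv_esymm η j 4
  have h2 : eval η (pderiv j (esymm (Fin 10) ℂ 2)) = ((Finset.univ.erase j).val.map η).esymm 1 :=
    eval_pderiv_esymm η j 1
  have h3 : eval η (pderiv j (esymm (Fin 10) ℂ 3)) = ((Finset.univ.erase j).val.map η).esymm 2 :=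
    eval_pderiv_esymm η j 2
  have e2 : eval η (esymm (Fin 10) ℂ 2) = (Finset.univ.val.map η).esymm 2 := eval_esymm_eq η 2
  have e3 : eval η (esymm (Fin 10) ℂ 3) = (Finset.univ.val.map η).esymm 3 := eval_esymm_eq η 3
  simp only [map_add, pderiv_mul, pderiv_C, zero_mul, zero_add, map_mul, eval_C]
  rw [h5, h2, h3, e2, e3]
  try ring

set_option maxHeartbeats 2000000 in
/-- **Case 19, additional singularities of `Q_{(7:−5)}`.** If `b² + 4b + 7 = 0`,
then the point `η = (3,3,3,3,b,b,b,−4−b,−4−b,−4−b)` satisfies `S₁(η) = 0` and is a singular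
point of the hyperquintic `Q_{(7:−5)} = {7·S₅ − 5·S₂·S₃ = 0}` in `ℙ⁸(ℂ)`. -/
theorem case19_additional_singularity (b : ℂ) (hb : b ^ 2 + 4 * b + 7 = 0) (η : Fin 10 → ℂ)
    (hη : η = ![3, 3, 3, 3, b, b, b, -4 - b, -4 - b, -4 - b]) :
    eval η (esymm (Fin 10) ℂ 1) = 0 ∧
    ∃ μ : ℂ, ∀ i, eval η (pderiv i
      (C (7 : ℂ) * esymm (Fin 10) ℂ 5
        + C (-5 : ℂ) * (esymm (Fin 10) ℂ 2 * esymm (Fin 10) ℂ 3))) = μ := by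
  subst hη
  set η : Fin 10 → ℂ := ![3, 3, 3, 3, b, b, b, -4 - b, -4 - b, -4 - b] with hη
  have hmu : Finset.univ.val.map η
      = (↑([3, 3, 3, 3, b, b, b, -4 - b, -4 - b, -4 - b] : List ℂ) : Multiset ℂ) := by
    have h : (Finset.univ : Finset (Fin 10)).val
        = (↑([0,1,2,3,4,5,6,7,8,9] : List (Fin 10)) : Multiset (Fin 10)) := by decide
    rw [h]; rfl
  constructor
  · rw [eval_esymm_eq, hmu]
    simp only [← Multiset.cons_coe, Multiset.coe_nil, multiset_esymm_cons, multiset_esymm_nil,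
      multiset_esymm_zero]
    try ring
  · refine ⟨-882, fun i => ?_⟩
    rw [keyD, hmu]
    fin_cases i
    · rw [show ((⟨0, by norm_num⟩ : Fin 10)) = (0 : Fin 10) from rfl]
      have he : (Finset.univ.erase (0 : Fin 10)).val
          = (↑([1,2,3,4,5,6,7,8,9] : List (Fin 10)) : Multiset (Fin 10)) := by decide
      have hm : (Finset.univ.erase (0 : Fin 10)).val.map η
          = (↑([3,3,3,b,b,b,-4-b,-4-b,-4-b] : List ℂ) : Multiset ℂ) := by rw [he]; rfl
      rw [hm]
      simp only [← Multiset.cons_coe, Multiset.coe_nil, multiset_esymm_cons, multiset_esymm_nil,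
        multiset_esymm_zero]
      linear_combination (-24*b^2 - 96*b - 528) * hb
    · rw [show ((⟨1, by norm_num⟩ : Fin 10)) = (1 : Fin 10) from rfl]
      have he : (Finset.univ.erase (1 : Fin 10)).val
          = (↑([0,2,3,4,5,6,7,8,9] : List (Fin 10)) : Multiset (Fin 10)) := by decide
      have hm : (Finset.univ.erase (1 : Fin 10)).val.map η
          = (↑([3,3,3,b,b,b,-4-b,-4-b,-4-b] : List ℂ) : Multiset ℂ) := by rw [he]; rfl
      rw [hm]
      simp only [← Multiset.cons_coe, Multiset.coe_nil, multiset_esymm_cons, multiset_esymm_nil,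
        multiset_esymm_zero]
      linear_combination (-24*b^2 - 96*b - 528) * hb
    · rw [show ((⟨2, by norm_num⟩ : Fin 10)) = (2 : Fin 10) from rfl]
      have he : (Finset.univ.erase (2 : Fin 10)).val
          = (↑([0,1,3,4,5,6,7,8,9] : List (Fin 10)) : Multiset (Fin 10)) := by decide
      have hm : (Finset.univ.erase (2 : Fin 10)).val.map η
          = (↑([3,3,3,b,b,b,-4-b,-4-b,-4-b] : List ℂ) : Multiset ℂ) := by rw [he]; rfl
      rw [hm]
      simp only [← Multiset.cons_coe, Multiset.coe_nil, multiset_esymm_cons, multiset_esymm_nil,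
        multiset_esymm_zero]
      linear_combination (-24*b^2 - 96*b - 528) * hb
    · rw [show ((⟨3, by norm_num⟩ : Fin 10)) = (3 : Fin 10) from rfl]
      have he : (Finset.univ.erase (3 : Fin 10)).val
          = (↑([0,1,2,4,5,6,7,8,9] : List (Fin 10)) : Multiset (Fin 10)) := by decide
      have hm : (Finset.univ.erase (3 : Fin 10)).val.map η
          = (↑([3,3,3,b,b,b,-4-b,-4-b,-4-b] : List ℂ) : Multiset ℂ) := by rw [he]; rfl
      rw [hm]
      simp only [← Multiset.cons_coe, Multiset.coe_nil, multiset_esymm_cons, multiset_esymm_nil,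
        multiset_esymm_zero]
      linear_combination (-24*b^2 - 96*b - 528) * hb
    · rw [show ((⟨4, by norm_num⟩ : Fin 10)) = (4 : Fin 10) from rfl]
      have he : (Finset.univ.erase (4 : Fin 10)).val
          = (↑([0,1,2,3,5,6,7,8,9] : List (Fin 10)) : Multiset (Fin 10)) := by decide
      have hm : (Finset.univ.erase (4 : Fin 10)).val.map η
          = (↑([3,3,3,3,b,b,-4-b,-4-b,-4-b] : List ℂ) : Multiset ℂ) := by rw [he]; rfl
      rw [hm]
      simp only [← Multiset.cons_coe, Multiset.coe_nil, multiset_esymm_cons, multiset_esymm_nil,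
        multiset_esymm_zero]
      linear_combination (-23*b^2 - 100*b - 525) * hb
    · rw [show ((⟨5, by norm_num⟩ : Fin 10)) = (5 : Fin 10) from rfl]
      have he : (Finset.univ.erase (5 : Fin 10)).val
          = (↑([0,1,2,3,4,6,7,8,9] : List (Fin 10)) : Multiset (Fin 10)) := by decide
      have hm : (Finset.univ.erase (5 : Fin 10)).val.map η
          = (↑([3,3,3,3,b,b,-4-b,-4-b,-4-b] : List ℂ) : Multiset ℂ) := by rw [he]; rfl
      rw [hm]
      simp only [← Multiset.cons_coe, Multiset.coe_nil, multiset_esymm_cons, multiset_esymm_nil,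
        multiset_esymm_zero]
      linear_combination (-23*b^2 - 100*b - 525) * hb
    · rw [show ((⟨6, by norm_num⟩ : Fin 10)) = (6 : Fin 10) from rfl]
      have he : (Finset.univ.erase (6 : Fin 10)).val
          = (↑([0,1,2,3,4,5,7,8,9] : List (Fin 10)) : Multiset (Fin 10)) := by decide
      have hm : (Finset.univ.erase (6 : Fin 10)).val.map η
          = (↑([3,3,3,3,b,b,-4-b,-4-b,-4-b] : List ℂ) : Multiset ℂ) := by rw [he]; rfl
      rw [hm]
      simp only [← Multiset.cons_coe, Multiset.coe_nil, multiset_esymm_cons, multiset_esymm_nil,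
        multiset_esymm_zero]
      linear_combination (-23*b^2 - 100*b - 525) * hb
    · rw [show ((⟨7, by norm_num⟩ : Fin 10)) = (7 : Fin 10) from rfl]
      have he : (Finset.univ.erase (7 : Fin 10)).val
          = (↑([0,1,2,3,4,5,6,8,9] : List (Fin 10)) : Multiset (Fin 10)) := by decide
      have hm : (Finset.univ.erase (7 : Fin 10)).val.map η
          = (↑([3,3,3,3,b,b,b,-4-b,-4-b] : List ℂ) : Multiset ℂ) := by rw [he]; rfl
      rw [hm]
      simp only [← Multiset.cons_coe, Multiset.coe_nil, multiset_esymm_cons, multiset_esymm_nil,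
        multiset_esymm_zero]
      linear_combination (-23*b^2 - 84*b - 493) * hb
    · rw [show ((⟨8, by norm_num⟩ : Fin 10)) = (8 : Fin 10) from rfl]
      have he : (Finset.univ.erase (8 : Fin 10)).val
          = (↑([0,1,2,3,4,5,6,7,9] : List (Fin 10)) : Multiset (Fin 10)) := by decide
      have hm : (Finset.univ.erase (8 : Fin 10)).val.map η
          = (↑([3,3,3,3,b,b,b,-4-b,-4-b] : List ℂ) : Multiset ℂ) := by rw [he]; rfl
      rw [hm]
      simp only [← Multiset.cons_coe, Multiset.coe_nil, multiset_esymm_cons, multiset_esymm_nil,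
        multiset_esymm_zero]
      linear_combination (-23*b^2 - 84*b - 493) * hb
    · rw [show ((⟨9, by norm_num⟩ : Fin 10)) = (9 : Fin 10) from rfl]
      have he : (Finset.univ.erase (9 : Fin 10)).val
          = (↑([0,1,2,3,4,5,6,7,8] : List (Fin 10)) : Multiset (Fin 10)) := by decide
      have hm : (Finset.univ.erase (9 : Fin 10)).val.map η
          = (↑([3,3,3,3,b,b,b,-4-b,-4-b] : List ℂ) : Multiset ℂ) := by rw [he]; rfl
      rw [hm]
      simp only [← Multiset.cons_coe, Multiset.coe_nil, multiset_esymm_cons, multiset_esymm_nil,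
        multiset_esymm_zero]
      linear_combination (-23*b^2 - 84*b - 493) * hb
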